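/- Let ϑ(z) = ‖z − ξ‖²_Q + d with Q symmetric positive definite, and let Γ ⊆ Ω be nonempty closed convex subsets of ℝⁿ. Let ẑ minimize ϑ over Ω and z̄ minimize ϑ over Γ, and set Δz = z̄ − ẑ. Then ϑ(z̄) ≥ ϑ(ẑ) + ϑ(Δz + ξ) − d. -/

import Mathlib

open Matrix

theorem constrained_min_lower_bound {n : ℕ}
    (Q : Matrix (Fin n) (Fin n) ℝ) (hQ : Q.PosDef)
    (ξ : Fin n → ℝ) (d : ℝ)
    (ϑ : (Fin n → ℝ) → ℝ)
    (hϑ : ∀ z, ϑ z = (z - ξ) ⬝ᵥ (Q *ᵥ (z - ξ)) + d)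
    (Γ Ω : Set (Fin n → ℝ))
    (hΓne : Γ.Nonempty) (hΓclosed : IsClosed Γ) (hΓconv : Convex ℝ Γ)
    (hΩne : Ω.Nonempty) (hΩclosed : IsClosed Ω) (hΩconv : Convex ℝ Ω)
    (hsub : Γ ⊆ Ω)
    (zhat zbar : Fin n → ℝ)
    (hzhat : zhat ∈ Ω) (hzhatmin : ∀ z ∈ Ω, ϑ zhat ≤ ϑ z)
    (hzbar : zbar ∈ Γ) (hzbarmin : ∀ z ∈ Γ, ϑ zbar ≤ ϑ z) :
    ϑ zhat + ϑ ((zbar - zhat) + ξ) - d ≤ ϑ zbar := by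
  set a := zhat - ξ with ha
  set b := zbar - zhat with hb
  have hsym : b ⬝ᵥ Q *ᵥ a = a ⬝ᵥ Q *ᵥ b := by
    have hQt : Qᵀ = Q := by simpa using hQ.1.eq
    rw [dotProduct_mulVec, ← mulVec_transpose, hQt, dotProduct_comm]
  have hexp : ∀ t : ℝ, ϑ (zhat + t • b) =
      ϑ zhat + 2*t*(a ⬝ᵥ Q *ᵥ b) + t^2*(b ⬝ᵥ Q *ᵥ b) := by
    intro t
    rw [hϑ, hϑ]
    have h1 : zhat + t • b - ξ = a + t • b := by
      rw [ha]; abel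
    rw [h1]
    simp only [dotProduct_add, add_dotProduct, mulVec_add, mulVec_smul,
      dotProduct_smul, smul_dotProduct, smul_eq_mul]
    rw [hsym]; ring
  have hstep : ∀ t : ℝ, 0 < t → t ≤ 1 →
      0 ≤ 2 * (a ⬝ᵥ Q *ᵥ b) + t * (b ⬝ᵥ Q *ᵥ b) := by
    intro t ht0 ht1
    have hmem : zhat + t • b ∈ Ω := by
      have := hΩconv hzhat (hsub hzbar) (by linarith : (0:ℝ) ≤ 1 - t)
        ht0.le (by ring)
      convert this using 1
      rw [hb]
      funext i
      simp [Pi.smul_apply, smul_eq_mul]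
      ring
    have h := hzhatmin _ hmem
    rw [hexp t] at h
    nlinarith
  have hbb : 0 ≤ b ⬝ᵥ Q *ᵥ b := by simpa using hQ.posSemidef.dotProduct_mulVec_nonneg b
  have hVI : 0 ≤ a ⬝ᵥ Q *ᵥ b := by
    by_contra hneg
    push_neg at hneg
    set s := a ⬝ᵥ Q *ᵥ b
    set c := b ⬝ᵥ Q *ᵥ b
    set t := min 1 ((-s)/(c+1)) with htdef
    have ht0 : 0 < t := lt_min one_pos (div_pos (by linarith) (by linarith))
    have ht1 : t ≤ 1 := min_le_left _ _
    have htc : t * c ≤ -s := by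
      have h2 : t ≤ (-s)/(c+1) := min_le_right _ _
      have : t * c ≤ ((-s)/(c+1)) * c := by nlinarith
      calc t * c ≤ ((-s)/(c+1)) * c := this
        _ ≤ -s := by
          rw [div_mul_eq_mul_div, div_le_iff₀ (by linarith)]
          nlinarith
    have := hstep t ht0 ht1
    linarith
  have e1 : ϑ zbar = ϑ (zhat + (1:ℝ) • b) := by
    congr 1
    rw [hb]; funext i; simp
  rw [e1, hexp 1, hϑ ((zbar - zhat) + ξ), hϑ zhat]
  have h2 : zbar - zhat + ξ - ξ = b := by rw [hb]; abel
  rw [h2]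
  linarith
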